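/- Let u_λ minimize D_λ(u) = λ² ∑_{i=1}^n (u(p_i)−q_i)² + λ‖∇^k u‖²_{L²(𝕋^m)} + ‖u‖²_{L²(𝕋^m)} over the space TP_ω of trigonometric polynomials of degree ≤ ω. If every data point p_i lies on the uniform rectangular grid with spacing 1/ω_j in coordinate j, then lim_{λ→∞} u_λ(p_i) = q_i for all i. -/

import Mathlib

open Filter

/-- Fourier multiplier weight of the `k`-gradient seminorm on `𝕋^m`. -/
noncomputable def gradW (m k : ℕ) (l : Fin m → ℤ) : ℝ :=
  ∑ j, (2 * Real.pi * (l j : ℝ)) ^ (2 * k)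

/-- Coefficient sequences of real-valued trigonometric polynomials of degree `≤ ω`:
conjugate-symmetric and supported in the box `−ω ≤ l ≤ ω`. -/
def TPcoef (m : ℕ) (ω : Fin m → ℕ) (d : (Fin m → ℤ) → ℂ) : Prop :=
  (∀ l, d (-l) = (starRingEnd ℂ) (d l)) ∧
  ∀ l : Fin m → ℤ, (¬ ∀ j, |l j| ≤ (ω j : ℤ)) → d l = 0

/-- Pointwise evaluation of the trigonometric polynomial with coefficients `d`. -/
noncomputable def evalF (m : ℕ) (d : (Fin m → ℤ) → ℂ) (x : Fin m → ℝ) : ℝ :=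
  (∑' l : Fin m → ℤ,
    d l * Complex.exp (2 * (Real.pi : ℂ) * Complex.I * ∑ j, (l j : ℂ) * (x j : ℂ))).re

/-- `D_λ(u) = λ² ∑_i (u(p_i) − q_i)² + λ‖∇^k u‖²_{L²(𝕋^m)} + ‖u‖²_{L²(𝕋^m)}`. -/
noncomputable def Dfun (m k nn : ℕ) (lam : ℝ) (p : Fin nn → Fin m → ℝ)
    (q : Fin nn → ℝ) (d : (Fin m → ℤ) → ℂ) : ℝ :=
  lam ^ 2 * ∑ i, (evalF m d (p i) - q i) ^ 2
    + lam * ∑' l : Fin m → ℤ, gradW m k l * ‖d l‖ ^ 2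
    + ∑' l : Fin m → ℤ, ‖d l‖ ^ 2

noncomputable def ww (N : ℕ) (t : ℤ) : ℝ :=
  if |t| < (N:ℤ) then 1/(2*N) else if |t| = (N:ℤ) then 1/(4*N) else 0

noncomputable def ee (r : ℝ) : ℂ := Complex.exp (2 * (Real.pi:ℂ) * Complex.I * r)

lemma ee_ne_zero (r : ℝ) : ee r ≠ 0 := Complex.exp_ne_zero _

lemma ee_add (r s : ℝ) : ee (r + s) = ee r * ee s := by
  rw [ee, ee, ee, ← Complex.exp_add]
  push_cast; ring_nf

lemma ee_int (a : ℤ) : ee ((a:ℤ):ℝ) = 1 := by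
  rw [ee]
  have := Complex.exp_int_mul_two_pi_mul_I a
  rw [← this]; push_cast; ring_nf

lemma ee_zpow (r : ℝ) (t : ℤ) : ee ((t:ℝ) * r) = ee r ^ t := by
  rw [ee, ee, ← Complex.exp_int_mul]
  push_cast; ring_nf

lemma ee_conj (r : ℝ) : (starRingEnd ℂ) (ee r) = ee (-r) := by
  rw [ee, ee, ← Complex.exp_conj]
  congr 1
  simp only [map_mul, map_ofNat, Complex.conj_ofReal, Complex.conj_I]
  push_cast; ring

lemma ww_neg (N : ℕ) (t : ℤ) : ww N (-t) = ww N t := by simp [ww, abs_neg]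

lemma ww_zero_of (N : ℕ) (t : ℤ) (h : ¬ |t| ≤ (N:ℤ)) : ww N t = 0 := by
  rw [ww, if_neg (by omega), if_neg (by omega)]

lemma sum_zpow_Ico (ζ : ℂ) (hζ : ζ ≠ 0) (a : ℤ) (N : ℕ) :
    ∑ t ∈ Finset.Ico a (a + (N:ℤ)), ζ ^ t = ζ ^ a * ∑ s ∈ Finset.range N, ζ ^ s := by
  induction N with
  | zero => simp
  | succ n ih =>
    have h2 : ((n+1:ℕ):ℤ) = (n:ℤ)+1 := by push_cast; ring
    have h1 : Finset.Ico a (a + ((n:ℤ)+1)) = insert (a + n) (Finset.Ico a (a + n)) := by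
      ext x; simp only [Finset.mem_Ico, Finset.mem_insert]; omega
    rw [h2, h1, Finset.sum_insert (by simp), ih, Finset.sum_range_succ,
      zpow_add₀ hζ, zpow_natCast]
    ring

lemma oneD (N : ℕ) (hN : 1 ≤ N) (a : ℤ) (ha : |a| < (N:ℤ)) :
    ∑ t ∈ Finset.Icc (-(N:ℤ)) (N:ℤ), (ww N t : ℂ) * ee ((t:ℝ) * ((a:ℝ) / N))
      = if a = 0 then 1 else 0 := by
  have hNR : ((N:ℝ)) ≠ 0 := by positivity
  set ζ : ℂ := ee ((a:ℝ)/N) with hζdef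
  have hζ0 : ζ ≠ 0 := ee_ne_zero _
  have hζN : ζ ^ (N:ℤ) = 1 := by
    rw [hζdef, ← ee_zpow]
    have h : ((N:ℤ):ℝ) * ((a:ℝ)/N) = ((a:ℤ):ℝ) := by push_cast; field_simp
    rw [h, ee_int]
  have key : ∀ t : ℤ, ee ((t:ℝ) * ((a:ℝ)/N)) = ζ ^ t := fun t => ee_zpow _ t
  have hrw : ∀ t ∈ Finset.Icc (-(N:ℤ)) (N:ℤ),
      (ww N t : ℂ) * ee ((t:ℝ) * ((a:ℝ)/N)) = (ww N t : ℂ) * ζ ^ t :=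
    fun t _ => by rw [key]
  rw [Finset.sum_congr rfl hrw]
  have hsplit : Finset.Icc (-(N:ℤ)) (N:ℤ) = insert (N:ℤ) (Finset.Ico (-(N:ℤ)) (N:ℤ)) := by
    ext x; simp only [Finset.mem_Icc, Finset.mem_insert, Finset.mem_Ico]; omega
  have hdiff : ∑ t ∈ Finset.Ico (-(N:ℤ)) (N:ℤ),
      (((ww N t:ℝ):ℂ) - ((1/(2*(N:ℝ)):ℝ):ℂ)) * ζ ^ t = -((1/(4*(N:ℝ)):ℝ):ℂ) := by
    rw [Finset.sum_eq_single_of_mem (-(N:ℤ)) (by simp only [Finset.mem_Ico]; omega)]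
    · have hw : ww N (-(N:ℤ)) = 1/(4*N) := by
        rw [ww, if_neg (by rw [abs_neg, Int.abs_natCast]; omega),
          if_pos (by rw [abs_neg, Int.abs_natCast])]
      rw [hw, zpow_neg, hζN, inv_one, mul_one]
      push_cast; ring
    · intro t ht hne
      simp only [Finset.mem_Ico] at ht
      have hw : ww N t = 1/(2*N) := by
        rw [ww, if_pos (by rw [abs_lt]; omega)]
      rw [hw]; ring
  have hmain : ∑ t ∈ Finset.Icc (-(N:ℤ)) (N:ℤ), (ww N t : ℂ) * ζ ^ t
      = ((1/(2*(N:ℝ)):ℝ):ℂ) * ∑ t ∈ Finset.Ico (-(N:ℤ)) (N:ℤ), ζ ^ t := by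
    rw [hsplit, Finset.sum_insert (by simp)]
    have e1 : ∑ t ∈ Finset.Ico (-(N:ℤ)) (N:ℤ), (ww N t : ℂ) * ζ ^ t
        = (∑ t ∈ Finset.Ico (-(N:ℤ)) (N:ℤ),
            (((ww N t:ℝ):ℂ) - ((1/(2*(N:ℝ)):ℝ):ℂ)) * ζ ^ t)
          + ((1/(2*(N:ℝ)):ℝ):ℂ) * ∑ t ∈ Finset.Ico (-(N:ℤ)) (N:ℤ), ζ ^ t := by
      rw [Finset.mul_sum, ← Finset.sum_add_distrib]
      apply Finset.sum_congr rfl; intros; ring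
    rw [e1, hdiff]
    have hw : ww N (N:ℤ) = 1/(4*N) := by
      rw [ww, if_neg (by rw [Int.abs_natCast]; omega), if_pos (by rw [Int.abs_natCast])]
    rw [hw, hζN]
    push_cast; ring
  rw [hmain]
  by_cases hA : a = 0
  · subst hA
    have : ζ = 1 := by
      rw [hζdef]; norm_num [ee]
    rw [this]
    simp only [one_zpow, Finset.sum_const, nsmul_eq_mul, if_pos, mul_one]
    rw [Int.card_Ico]
    have hcard : ((N:ℤ) - -(N:ℤ)).toNat = 2*N := by omega
    rw [hcard]
    push_cast
    have h2N : (2*(N:ℂ)) ≠ 0 := by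
      have : (N:ℂ) ≠ 0 := Nat.cast_ne_zero.mpr (by omega)
      simp [this]
    rw [one_div, inv_mul_eq_div, div_self h2N]
  · have hζ1 : ζ ≠ 1 := by
      intro h
      rw [hζdef, ee] at h
      rw [Complex.exp_eq_one_iff] at h
      obtain ⟨n, hn⟩ := h
      have h2 : (((a:ℝ)/N : ℝ):ℂ) = (n:ℂ) := by
        have hpi : (2*(Real.pi:ℂ)*Complex.I) ≠ 0 := by
          simp [Real.pi_ne_zero, Complex.I_ne_zero]
        apply mul_left_cancel₀ hpi
        rw [hn]; ring
      have h2' : (a:ℝ)/N = (n:ℝ) := by exact_mod_cast h2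
      have h3 : (a:ℝ) = (n:ℝ) * (N:ℝ) := by
        field_simp at h2'; linarith [h2']
      have h4 : a = n * N := by exact_mod_cast h3
      have hn0 : n ≠ 0 := by
        intro h; rw [h] at h4; simp at h4; exact hA h4
      have : (N:ℤ) ≤ |a| := by
        rw [h4, abs_mul]
        have h5 : 1 ≤ |n| := Int.one_le_abs hn0
        have h6 : |(N:ℤ)| = N := by rw [Int.abs_natCast]
        nlinarith [abs_nonneg n]
      omega
    have hG : ∑ t ∈ Finset.Ico (-(N:ℤ)) (N:ℤ), ζ ^ t = 0 := by
      have harg : Finset.Ico (-(N:ℤ)) (N:ℤ)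
          = Finset.Ico (-(N:ℤ)) (-(N:ℤ) + ((2*N:ℕ):ℤ)) := by
        congr 1; push_cast; ring
      rw [harg, sum_zpow_Ico ζ hζ0, geom_sum_eq hζ1]
      have : ζ ^ (2*N) = 1 := by
        rw [pow_mul']  -- (ζ^N)^2?  pow_mul: ζ^(2*N) = (ζ^2)^N; pow_mul' : = (ζ^N)^2
        have : ζ ^ (N:ℕ) = 1 := by rw [← zpow_natCast, hζN]
        rw [this, one_pow]
      rw [this]
      simp
    rw [hG, if_neg hA, mul_zero]

lemma ee_sum {α : Type*} (s : Finset α) (f : α → ℝ) :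
    ee (∑ j ∈ s, f j) = ∏ j ∈ s, ee (f j) := by
  simp only [ee, ← Complex.exp_sum]
  congr 1
  rw [Complex.ofReal_sum, Finset.mul_sum]

lemma gradW_nonneg (m k : ℕ) (l : Fin m → ℤ) : 0 ≤ gradW m k l :=
  Finset.sum_nonneg fun j _ => by rw [pow_mul]; exact pow_nonneg (sq_nonneg _) k

noncomputable def dd (m nn : ℕ) (ω : Fin m → ℕ) (nidx : Fin nn → Fin m → ℤ)
    (q : Fin nn → ℝ) (l : Fin m → ℤ) : ℂ :=
  (∏ j, ((ww (ω j) (l j) : ℝ) : ℂ)) *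
    ∑ i, (q i : ℂ) * ee (-∑ j, (l j : ℝ) * ((nidx i j : ℝ) / (ω j : ℝ)))

lemma dd_support (m nn : ℕ) (ω : Fin m → ℕ) (nidx : Fin nn → Fin m → ℤ)
    (q : Fin nn → ℝ) (l : Fin m → ℤ) (h : ¬ ∀ j, |l j| ≤ (ω j : ℤ)) :
    dd m nn ω nidx q l = 0 := by
  push_neg at h
  obtain ⟨j, hj⟩ := h
  rw [dd]
  apply mul_eq_zero_of_left
  apply Finset.prod_eq_zero (Finset.mem_univ j)
  rw [ww_zero_of _ _ (by omega)]
  norm_num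

lemma dd_conj (m nn : ℕ) (ω : Fin m → ℕ) (nidx : Fin nn → Fin m → ℤ)
    (q : Fin nn → ℝ) (l : Fin m → ℤ) :
    dd m nn ω nidx q (-l) = (starRingEnd ℂ) (dd m nn ω nidx q l) := by
  rw [dd, dd, map_mul, map_prod, map_sum]
  congr 1
  · refine Finset.prod_congr rfl fun j _ => ?_
    rw [Complex.conj_ofReal, Pi.neg_apply, ww_neg]
  · refine Finset.sum_congr rfl fun i _ => ?_
    rw [map_mul, Complex.conj_ofReal, ee_conj, neg_neg]
    congr 2
    have : ∀ j, ((-l) j : ℝ) * ((nidx i j : ℝ) / (ω j : ℝ))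
        = -((l j : ℝ) * ((nidx i j : ℝ) / (ω j : ℝ))) := fun j => by
      rw [Pi.neg_apply]; push_cast; ring
    rw [Finset.sum_congr rfl fun j _ => this j, Finset.sum_neg_distrib, neg_neg]

lemma interp (m nn : ℕ) (ω : Fin m → ℕ) (hω : ∀ j, 1 ≤ ω j)
    (nidx : Fin nn → Fin m → ℤ)
    (hrange : ∀ i j, 0 ≤ nidx i j ∧ nidx i j < (ω j : ℤ))
    (hinj : Function.Injective nidx) (q : Fin nn → ℝ) (i : Fin nn) :
    evalF m (dd m nn ω nidx q) (fun j => (nidx i j : ℝ) / (ω j : ℝ)) = q i := by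
  classical
  set x : Fin m → ℝ := fun j => (nidx i j : ℝ) / (ω j : ℝ) with hx
  set S : Finset (Fin m → ℤ) :=
    Fintype.piFinset (fun j => Finset.Icc (-(ω j : ℤ)) ((ω j : ℤ))) with hS
  rw [evalF]
  have hsupp : ∀ l ∉ S, dd m nn ω nidx q l *
      Complex.exp (2 * (Real.pi : ℂ) * Complex.I * ∑ j, (l j : ℂ) * (x j : ℂ)) = 0 := by
    intro l hl
    rw [dd_support m nn ω nidx q l, zero_mul]
    intro hall
    apply hl
    rw [hS, Fintype.mem_piFinset]
    intro j; rw [Finset.mem_Icc, ← abs_le]; exact hall j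
  rw [tsum_eq_sum hsupp]
  have hterm : ∀ l ∈ S, dd m nn ω nidx q l *
      Complex.exp (2 * (Real.pi : ℂ) * Complex.I * ∑ j, (l j : ℂ) * (x j : ℂ))
      = ∑ i' : Fin nn, (q i' : ℂ) *
          ∏ j, ((ww (ω j) (l j) : ℂ) *
            ee ((l j : ℝ) * (((nidx i j - nidx i' j : ℤ) : ℝ) / (ω j : ℝ)))) := by
    intro l _
    have hE : Complex.exp (2 * (Real.pi : ℂ) * Complex.I * ∑ j, (l j : ℂ) * (x j : ℂ))
        = ee (∑ j, (l j : ℝ) * x j) := by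
      rw [ee]; congr 1; push_cast; ring
    have hcc : ∀ i' : Fin nn,
        -∑ j, (l j : ℝ) * ((nidx i' j : ℝ) / (ω j : ℝ)) + ∑ j, (l j : ℝ) * x j
        = ∑ j, (l j : ℝ) * (((nidx i j - nidx i' j : ℤ) : ℝ) / (ω j : ℝ)) := by
      intro i'
      rw [neg_add_eq_sub, ← Finset.sum_sub_distrib]
      refine Finset.sum_congr rfl fun j _ => ?_
      have hxj : x j = (nidx i j : ℝ) / (ω j : ℝ) := rfl
      rw [hxj]; push_cast; ring
    have hprod : ∀ i' : Fin nn,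
        ∏ j, ((ww (ω j) (l j) : ℂ) *
            ee ((l j : ℝ) * (((nidx i j - nidx i' j : ℤ) : ℝ) / (ω j : ℝ))))
        = (∏ j, ((ww (ω j) (l j) : ℝ) : ℂ)) *
          (ee (-∑ j, (l j : ℝ) * ((nidx i' j : ℝ) / (ω j : ℝ))) * ee (∑ j, (l j : ℝ) * x j)) := by
      intro i'
      rw [Finset.prod_mul_distrib, ← ee_sum, ← hcc i', ee_add]
    rw [dd, hE]
    calc (∏ j, ((ww (ω j) (l j) : ℝ) : ℂ)) *
          (∑ i', (q i' : ℂ) * ee (-∑ j, (l j : ℝ) * ((nidx i' j : ℝ) / (ω j : ℝ)))) *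
          ee (∑ j, (l j : ℝ) * x j)
        = ∑ i', (q i' : ℂ) * ((∏ j, ((ww (ω j) (l j) : ℝ) : ℂ)) *
            (ee (-∑ j, (l j : ℝ) * ((nidx i' j : ℝ) / (ω j : ℝ))) * ee (∑ j, (l j : ℝ) * x j))) := by
          rw [Finset.mul_sum, Finset.sum_mul]
          exact Finset.sum_congr rfl fun i' _ => by ring
      _ = ∑ i' : Fin nn, (q i' : ℂ) *
          ∏ j, ((ww (ω j) (l j) : ℂ) *
            ee ((l j : ℝ) * (((nidx i j - nidx i' j : ℤ) : ℝ) / (ω j : ℝ)))) :=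
          Finset.sum_congr rfl fun i' _ => by rw [hprod i']
  rw [Finset.sum_congr rfl hterm, Finset.sum_comm]
  have hInner : ∀ i' : Fin nn, ∑ l ∈ S, ((q i' : ℂ) *
      ∏ j, ((ww (ω j) (l j) : ℂ) *
        ee ((l j : ℝ) * (((nidx i j - nidx i' j : ℤ) : ℝ) / (ω j : ℝ)))))
      = (q i' : ℂ) * (if i' = i then 1 else 0) := by
    intro i'
    rw [← Finset.mul_sum]
    congr 1
    rw [hS, ← Finset.prod_univ_sum (fun j => Finset.Icc (-(ω j : ℤ)) ((ω j : ℤ)))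
      (fun j t => ((ww (ω j) t : ℂ) *
        ee ((t : ℝ) * (((nidx i j - nidx i' j : ℤ) : ℝ) / (ω j : ℝ)))))]
    have hfac : ∀ j, ∑ t ∈ Finset.Icc (-(ω j : ℤ)) ((ω j : ℤ)),
        ((ww (ω j) t : ℂ) * ee ((t : ℝ) * (((nidx i j - nidx i' j : ℤ) : ℝ) / (ω j : ℝ))))
        = if nidx i j - nidx i' j = 0 then 1 else 0 := by
      intro j
      exact oneD (ω j) (hω j) (nidx i j - nidx i' j)
        (by have h1 := hrange i j; have h2 := hrange i' j; rw [abs_lt]; omega)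
    rw [Finset.prod_congr rfl fun j _ => hfac j]
    by_cases h : i' = i
    · subst h; simp
    · rw [if_neg h]
      have hex : ∃ j, ¬ (nidx i j - nidx i' j = 0) := by
        by_contra hall
        push_neg at hall
        apply h
        apply hinj
        funext j
        have := hall j
        omega
      obtain ⟨j, hj⟩ := hex
      exact Finset.prod_eq_zero (Finset.mem_univ j) (by rw [if_neg hj])
  rw [Finset.sum_congr rfl fun i' _ => hInner i']
  rw [Finset.sum_eq_single_of_mem i (Finset.mem_univ i)
    (fun i' _ hne => by rw [if_neg hne, mul_zero])]
  rw [if_pos rfl, mul_one, Complex.ofReal_re]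

/-- If `u_λ` minimizes `D_λ` over the trigonometric polynomials of degree `≤ ω`
and all data points lie on the uniform rectangular grid with spacing `1/ω_j` in
coordinate `j` (i.e. `p_i = (n_i^1/ω_1, …, n_i^m/ω_m)` with distinct indices),
then `u_λ(p_i) → q_i` as `λ → ∞` for every `i`. -/
theorem stmt_19 (m k nn : ℕ) (hm : 0 < m) (hk : 0 < k)
    (hkm : (m : ℝ) / 2 < (k : ℝ))
    (ω : Fin m → ℕ) (hω : ∀ j, 1 ≤ ω j)
    (nidx : Fin nn → Fin m → ℤ)
    (hrange : ∀ i j, 0 ≤ nidx i j ∧ nidx i j < (ω j : ℤ))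
    (hinj : Function.Injective nidx)
    (q : Fin nn → ℝ)
    (u : ℝ → ((Fin m → ℤ) → ℂ))
    (hu : ∀ lam : ℝ, 0 < lam → TPcoef m ω (u lam) ∧
      ∀ d : (Fin m → ℤ) → ℂ, TPcoef m ω d →
        Dfun m k nn lam (fun i j => (nidx i j : ℝ) / (ω j : ℝ)) q (u lam) ≤
        Dfun m k nn lam (fun i j => (nidx i j : ℝ) / (ω j : ℝ)) q d) :
    ∀ i : Fin nn,
      Tendsto (fun lam => evalF m (u lam) (fun j => (nidx i j : ℝ) / (ω j : ℝ)))
        atTop (nhds (q i)) := by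
  classical
  intro i
  set d : (Fin m → ℤ) → ℂ := dd m nn ω nidx q with hd
  have hTP : TPcoef m ω d :=
    ⟨fun l => dd_conj m nn ω nidx q l, fun l h => dd_support m nn ω nidx q l h⟩
  have hinterp : ∀ i' : Fin nn, evalF m d (fun j => (nidx i' j : ℝ) / (ω j : ℝ)) = q i' :=
    fun i' => interp m nn ω hω nidx hrange hinj q i'
  set C1 : ℝ := ∑' l : Fin m → ℤ, gradW m k l * ‖d l‖ ^ 2 with hC1
  set C2 : ℝ := ∑' l : Fin m → ℤ, ‖d l‖ ^ 2 with hC2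
  have hDd : ∀ lam : ℝ,
      Dfun m k nn lam (fun i j => (nidx i j : ℝ) / (ω j : ℝ)) q d = lam * C1 + C2 := by
    intro lam
    simp only [Dfun]
    have hz : ∑ i' : Fin nn,
        (evalF m d (fun j => (nidx i' j : ℝ) / (ω j : ℝ)) - q i') ^ 2 = 0 :=
      Finset.sum_eq_zero fun i' _ => by rw [hinterp i']; ring
    rw [hz, hC1, hC2]
    ring
  have hbound : ∀ lam : ℝ, 0 < lam →
      (evalF m (u lam) (fun j => (nidx i j : ℝ) / (ω j : ℝ)) - q i) ^ 2
        ≤ C1 / lam + C2 / lam ^ 2 := by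
    intro lam hlam
    have h1 := (hu lam hlam).2 d hTP
    rw [hDd lam] at h1
    have hA : (evalF m (u lam) (fun j => (nidx i j : ℝ) / (ω j : ℝ)) - q i) ^ 2
        ≤ ∑ i' : Fin nn, (evalF m (u lam) (fun j => (nidx i' j : ℝ) / (ω j : ℝ)) - q i') ^ 2 :=
      Finset.single_le_sum
        (f := fun i' => (evalF m (u lam) (fun j => (nidx i' j : ℝ) / (ω j : ℝ)) - q i') ^ 2)
        (fun _ _ => sq_nonneg _) (Finset.mem_univ i)
    have hB : 0 ≤ ∑' l : Fin m → ℤ, gradW m k l * ‖u lam l‖ ^ 2 :=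
      tsum_nonneg fun l => mul_nonneg (gradW_nonneg m k l) (by positivity)
    have hC : 0 ≤ ∑' l : Fin m → ℤ, ‖u lam l‖ ^ 2 := tsum_nonneg fun l => by positivity
    have h2 : lam ^ 2 * (evalF m (u lam) (fun j => (nidx i j : ℝ) / (ω j : ℝ)) - q i) ^ 2
        ≤ lam * C1 + C2 := by
      calc lam ^ 2 * (evalF m (u lam) (fun j => (nidx i j : ℝ) / (ω j : ℝ)) - q i) ^ 2
          ≤ lam ^ 2 *
            ∑ i' : Fin nn, (evalF m (u lam) (fun j => (nidx i' j : ℝ) / (ω j : ℝ)) - q i') ^ 2 :=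
            mul_le_mul_of_nonneg_left hA (sq_nonneg lam)
        _ ≤ Dfun m k nn lam (fun i j => (nidx i j : ℝ) / (ω j : ℝ)) q (u lam) := by
            simp only [Dfun]
            have : 0 ≤ lam * ∑' l : Fin m → ℤ, gradW m k l * ‖u lam l‖ ^ 2 :=
              mul_nonneg hlam.le hB
            linarith
        _ ≤ lam * C1 + C2 := h1
    have hlam2 : (0:ℝ) < lam ^ 2 := by positivity
    have h3 : (evalF m (u lam) (fun j => (nidx i j : ℝ) / (ω j : ℝ)) - q i) ^ 2
        ≤ (lam * C1 + C2) / lam ^ 2 := by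
      rw [le_div_iff₀ hlam2, mul_comm]
      exact h2
    have heq : (lam * C1 + C2) / lam ^ 2 = C1 / lam + C2 / lam ^ 2 := by
      field_simp
    rw [heq] at h3
    exact h3
  have hb0 : Tendsto (fun lam : ℝ => C1 / lam + C2 / lam ^ 2) atTop (nhds 0) := by
    have t1 : Tendsto (fun lam : ℝ => C1 / lam) atTop (nhds 0) :=
      Filter.Tendsto.div_atTop tendsto_const_nhds tendsto_id
    have t2 : Tendsto (fun lam : ℝ => C2 / lam ^ 2) atTop (nhds 0) :=
      Filter.Tendsto.div_atTop tendsto_const_nhds (Filter.tendsto_pow_atTop (by norm_num))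
    simpa using t1.add t2
  have hsq : Tendsto (fun lam : ℝ => Real.sqrt (C1 / lam + C2 / lam ^ 2)) atTop (nhds 0) := by
    have h := (Real.continuous_sqrt.tendsto 0).comp hb0
    simpa [Real.sqrt_zero, Function.comp_def] using h
  have habs : ∀ᶠ lam : ℝ in atTop,
      |evalF m (u lam) (fun j => (nidx i j : ℝ) / (ω j : ℝ)) - q i|
        ≤ Real.sqrt (C1 / lam + C2 / lam ^ 2) := by
    filter_upwards [eventually_gt_atTop (0:ℝ)] with lam hlam
    exact Real.abs_le_sqrt (hbound lam hlam)
  have hneg : Tendsto (fun lam : ℝ => -Real.sqrt (C1 / lam + C2 / lam ^ 2)) atTop (nhds 0) := by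
    simpa using hsq.neg
  have hten : Tendsto
      (fun lam : ℝ => evalF m (u lam) (fun j => (nidx i j : ℝ) / (ω j : ℝ)) - q i)
      atTop (nhds 0) := by
    apply tendsto_of_tendsto_of_tendsto_of_le_of_le' hneg hsq
    · filter_upwards [habs] with lam h
      exact (abs_le.mp h).1
    · filter_upwards [habs] with lam h
      exact le_trans (le_abs_self _) h
  have := hten.add (tendsto_const_nhds (x := q i))
  simpa using this
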